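/- Let p be a prime, 𝕂 an algebraically closed field of characteristic p, and let σ : W(𝕂) → W(𝕂) be the Frobenius ring endomorphism of the ring of Witt vectors (the lift of x ↦ x^p). Then for every s ≥ 1 the map x ↦ σ^s(x)·x^{−1} is surjective on the group of units W(𝕂)^×: for every unit c ∈ W(𝕂)^× there exists a unit x ∈ W(𝕂)^× with σ^s(x) = c·x. -/

import Mathlib

noncomputable section

namespace WittFrobAux

open WittVector Polynomial

variable (p : ℕ) [hp : Fact p.Prime] {k : Type*} [Field k] [CharP k p] [IsAlgClosed k]

local notation "𝕎" => WittVector p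

lemma coeff_iterate_frobenius (s : ℕ) (x : 𝕎 k) (n : ℕ) :
    ((⇑(WittVector.frobenius (p := p) (R := k)))^[s] x).coeff n = x.coeff n ^ p ^ s := by
  induction s generalizing x with
  | zero => simp
  | succ s ih =>
    rw [Function.iterate_succ_apply, ih, coeff_frobenius_charP, ← pow_mul]
    congr 1
    rw [pow_succ]
    ring

lemma one_lt_q (s : ℕ) (hs : 1 ≤ s) : 1 < p ^ s :=
  Nat.one_lt_pow (by omega) hp.out.one_lt

lemma sol_exists (s : ℕ) (hs : 1 ≤ s) (c : 𝕎 k) :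
    ∃ x : k, x ^ (p ^ s - 1) = c.coeff 0 :=
  IsAlgClosed.exists_pow_nat_eq _ (by have := one_lt_q p s hs; omega)

/-- The 0th coefficient of the solution. -/
def sol (s : ℕ) (hs : 1 ≤ s) (c : 𝕎 k) : k :=
  Classical.choose (sol_exists p s hs c)

lemma sol_spec (s : ℕ) (hs : 1 ≤ s) (c : 𝕎 k) :
    sol p s hs c ^ (p ^ s - 1) = c.coeff 0 :=
  Classical.choose_spec (sol_exists p s hs c)

lemma sol_ne_zero (s : ℕ) (hs : 1 ≤ s) {c : 𝕎 k} (hc : c.coeff 0 ≠ 0) :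
    sol p s hs c ≠ 0 := by
  intro h
  apply hc
  rw [← sol_spec p s hs c, h, zero_pow]
  have := one_lt_q p s hs; omega

lemma sol_spec' (s : ℕ) (hs : 1 ≤ s) (c : 𝕎 k) :
    sol p s hs c ^ p ^ s = c.coeff 0 * sol p s hs c := by
  have h1 : p ^ s = (p ^ s - 1) + 1 := by have := one_lt_q p s hs; omega
  rw [h1, pow_succ, sol_spec]

/-- Polynomial determining the `n+1`st coefficient. -/
def succPoly (s n : ℕ) (c : 𝕎 k) (bs : Fin (n + 1) → k) : Polynomial k :=
  X ^ p ^ s - X * C (c.coeff 0 ^ p ^ (n + 1)) -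
    C (c.coeff (n + 1) * bs 0 ^ p ^ (n + 1) +
      nthRemainder p n (truncateFun (n + 1) c) (TruncatedWittVector.mk p bs))

lemma succPoly_degree (s n : ℕ) (hs : 1 ≤ s) (c : 𝕎 k) (bs : Fin (n + 1) → k) :
    (succPoly p s n c bs).degree = (p ^ s : ℕ) := by
  have hq := one_lt_q p s hs
  have h1 : (X * C (c.coeff 0 ^ p ^ (n + 1)) : Polynomial k).degree ≤ 1 := by
    apply le_trans (degree_mul_le _ _)
    have := degree_C_le (a := c.coeff 0 ^ p ^ (n + 1)) (R := k)
    rw [degree_X]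
    calc (1 : WithBot ℕ) + (C (c.coeff 0 ^ p ^ (n + 1)) : Polynomial k).degree
        ≤ 1 + 0 := by exact add_le_add le_rfl this
      _ = 1 := by norm_num
  have hX : (X ^ p ^ s : Polynomial k).degree = (p ^ s : ℕ) := by
    simp [degree_pow]
  have h2 : (X ^ p ^ s - X * C (c.coeff 0 ^ p ^ (n + 1)) : Polynomial k).degree
      = (p ^ s : ℕ) := by
    rw [degree_sub_eq_left_of_degree_lt, hX]
    rw [hX]
    refine lt_of_le_of_lt h1 ?_
    exact_mod_cast hq
  rw [succPoly, degree_sub_eq_left_of_degree_lt, h2]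
  rw [h2]
  refine lt_of_le_of_lt degree_C_le ?_
  exact_mod_cast (by omega : (0:ℕ) < p ^ s)

lemma succPoly_root_exists (s n : ℕ) (hs : 1 ≤ s) (c : 𝕎 k) (bs : Fin (n + 1) → k) :
    ∃ b : k, (succPoly p s n c bs).IsRoot b := by
  apply IsAlgClosed.exists_root
  rw [succPoly_degree p s n hs c bs]
  have := one_lt_q p s hs
  exact_mod_cast (by omega : (p ^ s : ℕ) ≠ 0)

/-- The `n+1`st coefficient of the solution. -/
def succVal (s n : ℕ) (hs : 1 ≤ s) (c : 𝕎 k) (bs : Fin (n + 1) → k) : k :=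
  Classical.choose (succPoly_root_exists p s n hs c bs)

lemma succVal_spec (s n : ℕ) (hs : 1 ≤ s) (c : 𝕎 k) (bs : Fin (n + 1) → k) :
    succVal p s n hs c bs ^ p ^ s =
      c.coeff (n + 1) * bs 0 ^ p ^ (n + 1) +
        succVal p s n hs c bs * c.coeff 0 ^ p ^ (n + 1) +
        nthRemainder p n (truncateFun (n + 1) c) (TruncatedWittVector.mk p bs) := by
  have := Classical.choose_spec (succPoly_root_exists p s n hs c bs)
  rw [Polynomial.IsRoot.def] at this
  simp only [succPoly, eval_sub, eval_pow, eval_X, eval_mul, eval_C, eval_add] at this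
  rw [sub_sub, sub_eq_zero] at this
  change succVal p s n hs c bs ^ p ^ s = succVal p s n hs c bs * c.coeff 0 ^ p ^ (n + 1) + _ at this
  linear_combination this

/-- Recursively defined coefficients of the solution. -/
@[semireducible] noncomputable def rc (s : ℕ) (hs : 1 ≤ s) (c : 𝕎 k) : ℕ → k
  | 0 => sol p s hs c
  | n + 1 => succVal p s n hs c fun i => rc s hs c i.val

lemma truncate_mk_rc (s : ℕ) (hs : 1 ≤ s) (c : 𝕎 k) (n : ℕ) :
    truncateFun (n + 1) (WittVector.mk p (rc p s hs c)) =
      TruncatedWittVector.mk p fun i : Fin (n + 1) => rc p s hs c i.val := by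
  ext i
  rw [coeff_truncateFun, TruncatedWittVector.coeff_mk, WittVector.coeff_mk]

lemma key (s : ℕ) (hs : 1 ≤ s) (c : 𝕎 k) :
    (⇑(WittVector.frobenius (p := p) (R := k)))^[s] (WittVector.mk p (rc p s hs c))
      = c * WittVector.mk p (rc p s hs c) := by
  ext n
  rw [coeff_iterate_frobenius]
  cases n with
  | zero =>
    rw [WittVector.mul_coeff_zero, WittVector.coeff_mk]
    show rc p s hs c 0 ^ p ^ s = c.coeff 0 * rc p s hs c 0
    simp only [rc]
    exact sol_spec' p s hs c
  | succ n =>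
    rw [nthRemainder_spec, WittVector.coeff_mk, truncate_mk_rc]
    have h := succVal_spec p s n hs c (fun i : Fin (n + 1) => rc p s hs c i.val)
    simp only [Fin.val_zero, rc] at h
    show rc p s hs c (n + 1) ^ p ^ s = _
    simp only [rc]
    exact h

end WittFrobAux

end

/-- for `𝕂` algebraically closed of characteristic `p` and `σ` the Witt vector
Frobenius, the map `x ↦ σ^s(x)·x⁻¹` is surjective on units of `W(𝕂)`: for every unit `c`
there is a unit `x` with `σ^s(x) = c·x`. -/
theorem wittVector_frobenius_units_surjective (p : ℕ) [Fact p.Prime]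
    (𝕂 : Type*) [Field 𝕂] [IsAlgClosed 𝕂] [CharP 𝕂 p]
    (s : ℕ) (hs : 1 ≤ s) (c : (WittVector p 𝕂)ˣ) :
    ∃ x : (WittVector p 𝕂)ˣ,
      (⇑(WittVector.frobenius (p := p) (R := 𝕂)))^[s] (x : WittVector p 𝕂)
        = (c : WittVector p 𝕂) * (x : WittVector p 𝕂) := by
  have hc : (c : WittVector p 𝕂).coeff 0 ≠ 0 := by
    intro h
    have h1 : ((c : WittVector p 𝕂) * ((c⁻¹ : (WittVector p 𝕂)ˣ) : WittVector p 𝕂)).coeff 0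
        = (1 : WittVector p 𝕂).coeff 0 := by
      rw [Units.mul_inv]
    rw [WittVector.mul_coeff_zero, h, zero_mul, WittVector.one_coeff_zero] at h1
    exact one_ne_zero h1.symm
  set y := WittVector.mk p (WittFrobAux.rc p s hs (c : WittVector p 𝕂)) with hy
  have hy0 : y.coeff 0 ≠ 0 := by
    rw [hy, WittVector.coeff_mk]
    show WittFrobAux.rc p s hs _ 0 ≠ 0
    simp only [WittFrobAux.rc]
    exact WittFrobAux.sol_ne_zero p s hs hc
  obtain ⟨u, hu⟩ := WittVector.isUnit_of_coeff_zero_ne_zero y hy0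
  refine ⟨u, ?_⟩
  rw [hu]
  exact WittFrobAux.key p s hs (c : WittVector p 𝕂)
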